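/- Let H be a self-adjoint operator on ℓ²(ℤ^d) and Λ ⊂ ℤ^d a finite set. Fix E* ∈ ℝ and β₂ > 0. Suppose there exists Λ′ ⊂ ℤ^d with ‖(H_{Λ′} − E*)⁻¹‖ ≤ (2β₂)⁻¹ and |Λ Δ Λ′| ≤ L, where Λ Δ Λ′ is the symmetric difference. Then the number of eigenvalues of H_Λ (counted with multiplicity) inside [E* − β₂, E* + β₂] does not exceed 3L. -/

import Mathlib

/-- The ℓ²-operator norm of a square complex matrix. -/
noncomputable def l2OpNorm {n : Type*} [Fintype n] [DecidableEq n]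
    (M : Matrix n n ℂ) : ℝ :=
  ‖LinearMap.toContinuousLinearMap (Matrix.toEuclideanLin M)‖

open Matrix in
private lemma repr_symm_coe' {n : Type*} [Fintype n] [DecidableEq n]
    (B : OrthonormalBasis n ℂ (EuclideanSpace ℂ n)) (a : EuclideanSpace ℂ n) :
    ⇑(B.repr.symm a) = ∑ i, a i • ⇑(B i) := by
  have h := B.sum_repr (B.repr.symm a)
  rw [LinearIsometryEquiv.apply_symm_apply] at h
  funext j
  rw [← h]
  rw [WithLp.ofLp_sum]
  rfl

private lemma sum_inter_eq {α M : Type*} [AddCommMonoid M] [DecidableEq α]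
    (s t : Finset α) (f : α → M) (hf : ∀ a, a ∉ s ∩ t → f a = 0) :
    ∑ x : ↥s, f x.1 = ∑ x : ↥t, f x.1 := by
  rw [Finset.sum_coe_sort s f, Finset.sum_coe_sort t f,
    ← Finset.sum_subset (Finset.inter_subset_left (s₁ := s) (s₂ := t))
      (fun a _ ha => hf a (by simp_all [Finset.mem_inter])),
    ← Finset.sum_subset (Finset.inter_subset_right (s₁ := s) (s₂ := t))
      (fun a _ ha => hf a (by simp_all [Finset.mem_inter]))]

private lemma sum_sub_le {α : Type*} [DecidableEq α]
    (s t : Finset α) (f : α → ℝ) (h0 : ∀ a, 0 ≤ f a) (hf : ∀ a ∉ s, f a = 0) :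
    ∑ x : ↥t, f x.1 ≤ ∑ x : ↥s, f x.1 := by
  rw [Finset.sum_coe_sort s f, Finset.sum_coe_sort t f]
  rw [← Finset.sum_subset (Finset.inter_subset_right (s₁ := s) (s₂ := t))
      (fun a _ ha => hf a (by simp_all [Finset.mem_inter]))]
  exact Finset.sum_le_sum_of_subset_of_nonneg (Finset.inter_subset_left)
    (fun a _ _ => h0 a)

open Matrix in
/-- Eigenvalue counting via Green's functions: let `H` be a self-adjoint operator on
`ℤ^d`, `Λ` a finite set, `E* ∈ ℝ` and `β₂ > 0`. If there exists `Λ′` with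
`‖(H_{Λ′} − E*)⁻¹‖ ≤ (2β₂)⁻¹` and `|Λ Δ Λ′| ≤ L`, then the number of eigenvalues of
`H_Λ` (with multiplicity) in `[E*−β₂, E*+β₂]` is at most `3L`. -/
theorem eigenvalue_counting (d : ℕ) (H : (Fin d → ℤ) → (Fin d → ℤ) → ℂ)
    (hsa : ∀ x y, H x y = starRingEnd ℂ (H y x))
    (Estar β₂ : ℝ) (hβ : 0 < β₂) (L : ℕ)
    (Λ Λ' : Finset (Fin d → ℤ))
    (hA : (Matrix.of fun x y : ↥Λ => H x.1 y.1).IsHermitian)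
    (hinv : IsUnit ((Matrix.of fun x y : ↥Λ' => H x.1 y.1)
      - (Estar : ℂ) • (1 : Matrix ↥Λ' ↥Λ' ℂ)).det)
    (hnorm : l2OpNorm (((Matrix.of fun x y : ↥Λ' => H x.1 y.1)
      - (Estar : ℂ) • (1 : Matrix ↥Λ' ↥Λ' ℂ))⁻¹) ≤ (2 * β₂)⁻¹)
    (hcard : ((Λ \ Λ') ∪ (Λ' \ Λ)).card ≤ L) :
    (Finset.univ.filter fun i =>
      hA.eigenvalues i ∈ Set.Icc (Estar - β₂) (Estar + β₂)).card ≤ 3 * L := by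
  classical
  by_contra hcon
  push_neg at hcon
  set A : Matrix ↥Λ ↥Λ ℂ := Matrix.of fun x y : ↥Λ => H x.1 y.1 with hAdef
  set S : Finset ↥Λ := Finset.univ.filter fun i =>
      hA.eigenvalues i ∈ Set.Icc (Estar - β₂) (Estar + β₂) with hSdef
  set B := hA.eigenvectorBasis with hBdef
  -- linear maps
  let ext0 : (↥S → ℂ) →ₗ[ℂ] (↥Λ → ℂ) :=
    { toFun := fun c i => if h : i ∈ S then c ⟨i, h⟩ else 0
      map_add' := by intro c c'; funext i; by_cases h : i ∈ S <;> simp [h]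
      map_smul' := by intro m c; funext i; by_cases h : i ∈ S <;> simp [h] }
  let G : EuclideanSpace ℂ ↥Λ →ₗ[ℂ] ((↥(Λ \ Λ') ⊕ ↥(Λ' \ Λ)) → ℂ) :=
    { toFun := fun v => Sum.elim
        (fun x => v ⟨x.1, (Finset.mem_sdiff.mp x.2).1⟩)
        (fun x => ∑ y : ↥Λ, H x.1 y.1 * v y)
      map_add' := by
        intro v v'; funext z; rcases z with x | x <;>
          simp [Finset.sum_add_distrib, mul_add]
      map_smul' := by
        intro m v; funext z; rcases z with x | x
        · simp
        · simp only [Sum.elim_inr, Pi.smul_apply, PiLp.smul_apply, smul_eq_mul,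
            RingHom.id_apply, Finset.mul_sum]
          exact Finset.sum_congr rfl fun y _ => by ring }
  let F : (↥S → ℂ) →ₗ[ℂ] ((↥(Λ \ Λ') ⊕ ↥(Λ' \ Λ)) → ℂ) :=
    G ∘ₗ B.repr.symm.toLinearEquiv.toLinearMap ∘ₗ
      (WithLp.linearEquiv 2 ℂ (↥Λ → ℂ)).symm.toLinearMap ∘ₗ ext0
  -- dimension count
  have hdisj : Disjoint (Λ \ Λ') (Λ' \ Λ) := disjoint_sdiff_sdiff
  have hrank : Module.finrank ℂ ((↥(Λ \ Λ') ⊕ ↥(Λ' \ Λ)) → ℂ)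
      < Module.finrank ℂ (↥S → ℂ) := by
    rw [Module.finrank_pi, Module.finrank_pi, Fintype.card_coe, Fintype.card_sum,
      Fintype.card_coe, Fintype.card_coe]
    rw [← Finset.card_union_of_disjoint hdisj]
    calc ((Λ \ Λ') ∪ (Λ' \ Λ)).card ≤ L := hcard
      _ ≤ 3 * L := by omega
      _ < S.card := hcon
  obtain ⟨c, hcker, hc0⟩ := (Submodule.ne_bot_iff _).mp
    (F.ker_ne_bot_of_finrank_lt hrank)
  set u : EuclideanSpace ℂ ↥Λ :=
    (WithLp.linearEquiv 2 ℂ (↥Λ → ℂ)).symm (ext0 c) with hudef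
  set v : EuclideanSpace ℂ ↥Λ := B.repr.symm u with hvdef
  have hu : ∀ i : ↥Λ, u i = if h : i ∈ S then c ⟨i, h⟩ else 0 := fun i => rfl
  have hGv : G v = 0 := by
    have : F c = 0 := hcker
    simpa [F, v, u] using this
  have hv1 : ∀ (x : Fin d → ℤ) (hx : x ∈ Λ \ Λ'),
      v ⟨x, (Finset.mem_sdiff.mp hx).1⟩ = 0 := by
    intro x hx
    exact congr_fun hGv (Sum.inl ⟨x, hx⟩)
  have hv2 : ∀ (x : Fin d → ℤ), x ∈ Λ' \ Λ →
      ∑ y : ↥Λ, H x y.1 * v y = 0 := by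
    intro x hx
    exact congr_fun hGv (Sum.inr ⟨x, hx⟩)
  have hvne : v ≠ 0 := by
    intro h
    apply hc0
    have hu0 : u = 0 := by
      have := congrArg B.repr h
      rwa [LinearIsometryEquiv.apply_symm_apply, map_zero] at this
    funext i
    have := congr_fun (congrArg (WithLp.equiv 2 _) hu0) i.1
    simpa [u, ext0, i.2] using this
  have hvpos : 0 < ‖v‖ := norm_pos_iff.mpr hvne
  have hvu : ‖v‖ = ‖u‖ := B.repr.symm.norm_map u
  -- eigen computation
  set u' : EuclideanSpace ℂ ↥Λ := (WithLp.linearEquiv 2 ℂ (↥Λ → ℂ)).symm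
    (fun i => ((hA.eigenvalues i : ℂ) - Estar) * u i) with hu'def
  set y : EuclideanSpace ℂ ↥Λ := B.repr.symm u' with hydef
  have hu'app : ∀ i : ↥Λ, u' i = ((hA.eigenvalues i : ℂ) - Estar) * u i := fun i => rfl
  have hkey : (A - (Estar : ℂ) • 1) *ᵥ ⇑v = ⇑y := by
    rw [Matrix.sub_mulVec, Matrix.smul_mulVec, Matrix.one_mulVec]
    rw [show (⇑v : ↥Λ → ℂ) = ∑ i, u i • ⇑(B i) from repr_symm_coe' B u,
      show (⇑y : ↥Λ → ℂ) = ∑ i, u' i • ⇑(B i) from repr_symm_coe' B u']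
    have hAmul : A *ᵥ (∑ i, u i • ⇑(B i)) = ∑ i, u i • (A *ᵥ ⇑(B i)) := by
      rw [← Matrix.mulVecLin_apply, map_sum]
      exact Finset.sum_congr rfl fun i _ => by
        rw [LinearMap.map_smul, Matrix.mulVecLin_apply]
    rw [hAmul, Finset.smul_sum, ← Finset.sum_sub_distrib]
    refine Finset.sum_congr rfl fun i _ => ?_
    rw [hA.mulVec_eigenvectorBasis]
    funext j
    simp only [Pi.sub_apply, Pi.smul_apply, smul_eq_mul, Complex.real_smul,
      hu'app]
    ring
  have hyv : ‖y‖ ≤ β₂ * ‖v‖ := by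
    rw [hydef, B.repr.symm.norm_map u', hvu]
    rw [EuclideanSpace.norm_eq, EuclideanSpace.norm_eq]
    rw [← Real.sqrt_sq hβ.le, ← Real.sqrt_mul (by positivity)]
    apply Real.sqrt_le_sqrt
    rw [Finset.mul_sum]
    refine Finset.sum_le_sum fun i _ => ?_
    rw [hu'app]
    by_cases h : i ∈ S
    · have hmem : hA.eigenvalues i ∈ Set.Icc (Estar - β₂) (Estar + β₂) := by
        have := h; rw [hSdef, Finset.mem_filter] at this; exact this.2
      have habs : |hA.eigenvalues i - Estar| ≤ β₂ :=
        abs_le.mpr ⟨by linarith [hmem.1], by linarith [hmem.2]⟩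
      have : ‖((hA.eigenvalues i : ℂ) - Estar)‖ ≤ β₂ := by
        rw [show ((hA.eigenvalues i : ℂ) - (Estar : ℂ)) =
          ((hA.eigenvalues i - Estar : ℝ) : ℂ) by push_cast; ring,
          Complex.norm_real]
        simpa using habs
      rw [norm_mul, mul_pow]
      have h2 : ‖((hA.eigenvalues i : ℂ) - Estar)‖ ^ 2 ≤ β₂ ^ 2 :=
        pow_le_pow_left₀ (norm_nonneg _) this 2
      exact mul_le_mul_of_nonneg_right h2 (by positivity)
    · rw [hu i, dif_neg h]
      simp
  -- the Λ' side
  set M : Matrix ↥Λ' ↥Λ' ℂ := (Matrix.of fun x y : ↥Λ' => H x.1 y.1)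
      - (Estar : ℂ) • (1 : Matrix ↥Λ' ↥Λ' ℂ) with hMdef
  set vb : (Fin d → ℤ) → ℂ := fun a => if h : a ∈ Λ then v ⟨a, h⟩ else 0 with hvbdef
  have hvb0 : ∀ a, a ∉ Λ ∩ Λ' → vb a = 0 := by
    intro a ha
    by_cases h : a ∈ Λ
    · have h' : a ∉ Λ' := fun h' => ha (Finset.mem_inter.mpr ⟨h, h'⟩)
      rw [hvbdef]; dsimp only
      rw [dif_pos h]
      exact hv1 a (Finset.mem_sdiff.mpr ⟨h, h'⟩)
    · rw [hvbdef]; dsimp only; rw [dif_neg h]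
  set w : EuclideanSpace ℂ ↥Λ' :=
    (WithLp.linearEquiv 2 ℂ (↥Λ' → ℂ)).symm (fun x : ↥Λ' => vb x.1) with hwdef
  have hwapp : ∀ x : ↥Λ', w x = vb x.1 := fun _ => rfl
  have hwv : ‖w‖ = ‖v‖ := by
    rw [EuclideanSpace.norm_eq, EuclideanSpace.norm_eq]
    congr 1
    have h1 : ∑ x : ↥Λ', ‖w x‖ ^ 2 = ∑ x : ↥Λ', ‖vb x.1‖ ^ 2 := rfl
    have h2 : ∑ x : ↥Λ, ‖v x‖ ^ 2 = ∑ x : ↥Λ, ‖vb x.1‖ ^ 2 :=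
      Finset.sum_congr rfl fun x _ => by
        rw [hvbdef]; dsimp only; rw [dif_pos x.2]
    rw [h1, h2]
    exact (sum_inter_eq Λ' Λ (fun a => ‖vb a‖ ^ 2) (fun a ha => by
      show ‖vb a‖ ^ 2 = 0
      rw [hvb0 a (by rwa [Finset.inter_comm] at ha)]; simp)).symm ▸ rfl
  have hwpos : 0 < ‖w‖ := by rw [hwv]; exact hvpos
  -- M *ᵥ w pointwise
  set yb : (Fin d → ℤ) → ℂ := fun a => if h : a ∈ Λ then y ⟨a, h⟩ else 0 with hybdef
  have hsum_eq : ∀ b : Fin d → ℤ,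
      ∑ x : ↥Λ', H b x.1 * vb x.1 = ∑ x : ↥Λ, H b x.1 * v x := by
    intro b
    rw [sum_inter_eq Λ' Λ (fun a => H b a * vb a) (fun a ha => by
      show H b a * vb a = 0
      rw [hvb0 a (by rwa [Finset.inter_comm] at ha)]; ring)]
    exact Finset.sum_congr rfl fun x _ => by
      rw [hvbdef]; dsimp only; rw [dif_pos x.2]
  have hMw : ∀ x : ↥Λ', (M *ᵥ ⇑w) x = yb x.1 := by
    intro x
    have hexp : (M *ᵥ ⇑w) x
        = ∑ z : ↥Λ', H x.1 z.1 * vb z.1 - Estar * vb x.1 := by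
      rw [hMdef, Matrix.sub_mulVec, Matrix.smul_mulVec, Matrix.one_mulVec]
      simp [Matrix.mulVec, dotProduct, hwapp]
    rw [hexp, hsum_eq]
    by_cases h : x.1 ∈ Λ
    · have hvbx : vb x.1 = v ⟨x.1, h⟩ := by
        rw [hvbdef]; dsimp only; rw [dif_pos h]
      have hyx : yb x.1 = y ⟨x.1, h⟩ := by
        rw [hybdef]; dsimp only; rw [dif_pos h]
      rw [hvbx, hyx]
      have hL : ((A - (Estar : ℂ) • 1) *ᵥ ⇑v) ⟨x.1, h⟩
          = ∑ x_1 : ↥Λ, H x.1 x_1.1 * v x_1 - Estar * v ⟨x.1, h⟩ := by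
        rw [Matrix.sub_mulVec, Matrix.smul_mulVec, Matrix.one_mulVec]
        simp [Matrix.mulVec, dotProduct, hAdef, Complex.real_smul]
      rw [← hL]
      exact congr_fun hkey ⟨x.1, h⟩
    · have hvbx : vb x.1 = 0 := by rw [hvbdef]; dsimp only; rw [dif_neg h]
      have hyx : yb x.1 = 0 := by rw [hybdef]; dsimp only; rw [dif_neg h]
      rw [hvbx, hyx, hv2 x.1 (Finset.mem_sdiff.mpr ⟨x.2, h⟩)]
      ring
  -- norm of M *ᵥ w
  set z : EuclideanSpace ℂ ↥Λ' :=
    (WithLp.linearEquiv 2 ℂ (↥Λ' → ℂ)).symm (M *ᵥ ⇑w) with hzdef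
  have hzy : ‖z‖ ≤ β₂ * ‖v‖ := by
    refine le_trans ?_ hyv
    rw [EuclideanSpace.norm_eq, EuclideanSpace.norm_eq]
    apply Real.sqrt_le_sqrt
    have h1 : ∑ x : ↥Λ', ‖z x‖ ^ 2 = ∑ x : ↥Λ', ‖yb x.1‖ ^ 2 :=
      Finset.sum_congr rfl fun x _ => by
        have : z x = (M *ᵥ ⇑w) x := rfl
        rw [this, hMw x]
    rw [h1]
    have h2 : ∑ x : ↥Λ, ‖y x‖ ^ 2 = ∑ x : ↥Λ, ‖yb x.1‖ ^ 2 :=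
      Finset.sum_congr rfl fun x _ => by
        rw [hybdef]; dsimp only; rw [dif_pos x.2]
    rw [h2]
    refine sum_sub_le Λ Λ' (fun a => ‖yb a‖ ^ 2) (fun a => by positivity)
      (fun a ha => by rw [hybdef]; dsimp only; rw [dif_neg ha]; simp)
  -- resolvent bound
  set T := LinearMap.toContinuousLinearMap (Matrix.toEuclideanLin M⁻¹) with hTdef
  have hTz : T z = w := by
    have h1 : T z = Matrix.toEuclideanLin M⁻¹ z :=
      congr_fun (LinearMap.coe_toContinuousLinearMap' _) z
    rw [h1, Matrix.toEuclideanLin_apply]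
    have h2 : z.ofLp = M *ᵥ ⇑w := rfl
    rw [h2, Matrix.mulVec_mulVec, Matrix.nonsing_inv_mul M hinv, Matrix.one_mulVec]
  have hTnorm : ‖T‖ ≤ (2 * β₂)⁻¹ := hnorm
  have hwle : ‖w‖ ≤ (2 * β₂)⁻¹ * (β₂ * ‖v‖) := by
    calc ‖w‖ = ‖T z‖ := by rw [hTz]
      _ ≤ ‖T‖ * ‖z‖ := T.le_opNorm z
      _ ≤ (2 * β₂)⁻¹ * (β₂ * ‖v‖) := by
          apply mul_le_mul hTnorm hzy (norm_nonneg z) (by positivity)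
  rw [hwv] at hwle
  have : (2 * β₂)⁻¹ * (β₂ * ‖v‖) = ‖v‖ / 2 := by
    field_simp
  rw [this] at hwle
  linarith
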